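/- arXiv:1107.5415 — 3 statements merged into one kernel-verified Lean document; each statement's English description precedes it below -/
import Mathlib

section
/- For a regular integer matrix M, the Fourier matrix F(M) = m^{-1/2}(exp(-2πi h^T M^{-1} g))_{h ∈ G(M^T), g ∈ G(M)} is unitary. -/
noncomputable section

/-- The subgroup `ℤ^d` of `ℝ^d` (vectors with integer entries). -/
abbrev intLat (d : ℕ) : AddSubgroup (Fin d → ℝ) :=
  (AddMonoidHom.compLeft (Int.castAddHom ℝ) (Fin d)).range

/-- The lattice `Λ(M) = M⁻¹ ℤ^d = {y ∈ ℝ^d : M y ∈ ℤ^d}` of a regular integer matrix. -/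
abbrev lat {d : ℕ} (M : Matrix (Fin d) (Fin d) ℤ) : AddSubgroup (Fin d → ℝ) :=
  (intLat d).comap (Matrix.mulVecLin (M.map (Int.cast : ℤ → ℝ))).toAddMonoidHom

/-- The pattern `P(M) = Λ(M)/ℤ^d`, realised as the image of `Λ(M)` in `ℝ^d/ℤ^d`. -/
abbrev pat {d : ℕ} (M : Matrix (Fin d) (Fin d) ℤ) :
    AddSubgroup ((Fin d → ℝ) ⧸ intLat d) :=
  (lat M).map (QuotientAddGroup.mk' (intLat d))

/-- The generating group `G(M) = ℤ^d / M ℤ^d`. -/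
abbrev gQuot {d : ℕ} (M : Matrix (Fin d) (Fin d) ℤ) : Type :=
  (Fin d → ℤ) ⧸ (Matrix.mulVecLin M).range.toAddSubgroup

open Matrix Complex Finset

/-- A nontrivial multiplicative function on a finite additive group sums to zero. -/
lemma char_sum_eq_zero {G : Type*} [AddCommGroup G] [Fintype G] (f : G → ℂ)
    (hmul : ∀ x y, f (x + y) = f x * f y) (y : G) (hy : f y ≠ 1) :
    ∑ x, f x = 0 := by
  have h1 : f y * ∑ x, f x = ∑ x, f x := by
    calc f y * ∑ x, f x = ∑ x, f (y + x) := by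
          rw [Finset.mul_sum]; exact Finset.sum_congr rfl fun x _ => (hmul y x).symm
      _ = ∑ x, f x :=
          Fintype.sum_bijective _ (Equiv.addLeft y).bijective _ _ (fun x => rfl)
  have h2 : (f y - 1) * ∑ x, f x = 0 := by linear_combination h1
  rcases mul_eq_zero.mp h2 with h | h
  · exact absurd (sub_eq_zero.mp h) hy
  · exact h

/-- Casting an integer matrix-vector product to `ℂ`. -/
lemma cast_mulVec {d : ℕ} (M : Matrix (Fin d) (Fin d) ℤ) (n : Fin d → ℤ) :
    (fun i => ((M.mulVec n) i : ℂ)) = (M.map (Int.cast : ℤ → ℂ)).mulVec (fun i => (n i : ℂ)) := by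
  funext i
  simp only [Matrix.mulVec, dotProduct, Matrix.map_apply]
  push_cast
  rfl

/-- The Fourier matrix `F(M) = m^{-1/2}(exp(-2πi hᵀ M⁻¹ g))`, indexed by complete sets
of representatives of `G(Mᵀ) = ℤ^d/Mᵀℤ^d` and `G(M) = ℤ^d/Mℤ^d`, is unitary. -/
theorem fourier_matrix_unitary (d : ℕ) (M : Matrix (Fin d) (Fin d) ℤ) (hM : M.det ≠ 0)
    (hrep grep : Fin M.det.natAbs → (Fin d → ℤ))
    (hh : Function.Bijective
      (fun k => (QuotientAddGroup.mk (hrep k) : gQuot M.transpose)))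
    (hg : Function.Bijective
      (fun k => (QuotientAddGroup.mk (grep k) : gQuot M))) :
    (fun k l : Fin M.det.natAbs =>
        ((Real.sqrt M.det.natAbs : ℂ))⁻¹ *
          Complex.exp ((-2 : ℂ) * Real.pi * Complex.I *
            dotProduct (fun i => (hrep k i : ℂ))
              ((M.map (Int.cast : ℤ → ℂ))⁻¹.mulVec (fun i => (grep l i : ℂ))))
      : Matrix (Fin M.det.natAbs) (Fin M.det.natAbs) ℂ)
      ∈ Matrix.unitaryGroup (Fin M.det.natAbs) ℂ := by
  classical
  have hm0 : ((M.det.natAbs : ℝ)) ≠ 0 := by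
    exact_mod_cast fun h => hM (Int.natAbs_eq_zero.mp (by exact_mod_cast h))
  set Mc : Matrix (Fin d) (Fin d) ℂ := M.map (Int.cast : ℤ → ℂ) with hMc
  have hdetMc : IsUnit Mc.det := by
    have hdet : Mc.det = ((M.det : ℤ) : ℂ) := ((Int.castRingHom ℂ).map_det M).symm
    rw [hdet]
    exact isUnit_iff_ne_zero.mpr (by exact_mod_cast hM)
  set N : Matrix (Fin d) (Fin d) ℂ := Mc⁻¹ with hN
  have hNM : N * Mc = 1 := Matrix.nonsing_inv_mul Mc hdetMc
  -- the conjugate of N is N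
  have hNconj : ∀ i j, (starRingEnd ℂ) (N i j) = N i j := by
    have hMcconj : Mc.map (starRingEnd ℂ) = Mc := by
      funext i j; simp [hMc, Matrix.map_apply]
    have h1 : (N.map (starRingEnd ℂ)) * Mc = 1 := by
      have h0 := congrArg (fun A => Matrix.map A (starRingEnd ℂ)) hNM
      simpa [_root_.Matrix.map_mul, hMcconj] using h0
    have h2 : Mc⁻¹ = N.map (starRingEnd ℂ) := Matrix.inv_eq_left_inv h1
    intro i j
    have := congrFun (congrFun h2.symm i) j
    simpa [Matrix.map_apply, hN] using this
  -- the phase function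
  set φ : (Fin d → ℤ) → (Fin d → ℤ) → ℂ := fun a g =>
    dotProduct (fun i => (a i : ℂ)) (N.mulVec (fun i => (g i : ℂ))) with hφ
  have hφadd : ∀ a a' g, φ (a + a') g = φ a g + φ a' g := by
    intro a a' g
    simp only [hφ, dotProduct]
    rw [← Finset.sum_add_distrib]
    refine Finset.sum_congr rfl fun i _ => ?_
    push_cast [Pi.add_apply]
    ring
  have hφaddg : ∀ a g g', φ a (g + g') = φ a g + φ a g' := by
    intro a g g'
    simp only [hφ, dotProduct, Matrix.mulVec]
    rw [← Finset.sum_add_distrib]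
    refine Finset.sum_congr rfl fun i _ => ?_
    rw [← mul_add]
    congr 1
    rw [← dotProduct, ← dotProduct, ← dotProduct, ← dotProduct_add]
    congr 1
    funext j
    simp [Pi.add_apply]
  have hφzero : ∀ g, φ 0 g = 0 := by
    intro g
    simp [hφ, dotProduct]
  -- φ is real: conj φ = φ
  have hφreal : ∀ a g, (starRingEnd ℂ) (φ a g) = φ a g := by
    intro a g
    simp only [hφ, dotProduct, Matrix.mulVec, map_sum, _root_.map_mul,
      map_intCast, hNconj]
  -- φ a (M n) is an integer
  have hφint : ∀ a n, φ a (M.mulVec n) = ((dotProduct a n : ℤ) : ℂ) := by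
    intro a n
    simp only [hφ]
    rw [cast_mulVec, Matrix.mulVec_mulVec, ← hMc, hNM]
    simp only [Matrix.one_mulVec, dotProduct]
    push_cast
    rfl
  set c : ℂ := ((Real.sqrt M.det.natAbs : ℂ))⁻¹ with hc
  have hcc : c * (starRingEnd ℂ) c = ((M.det.natAbs : ℂ))⁻¹ := by
    rw [hc, map_inv₀, Complex.conj_ofReal, ← mul_inv, ← Complex.ofReal_mul,
      Real.mul_self_sqrt (by positivity), Complex.ofReal_natCast]
  change Matrix.of (fun k l : Fin M.det.natAbs =>
    c * Complex.exp ((-2 : ℂ) * Real.pi * Complex.I * φ (hrep k) (grep l)))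
    ∈ Matrix.unitaryGroup (Fin M.det.natAbs) ℂ
  rw [Matrix.mem_unitaryGroup_iff]
  ext k k'
  simp only [Matrix.mul_apply, Matrix.star_apply, Matrix.one_apply, Matrix.of_apply]
  have hentry : ∀ l, (c * Complex.exp ((-2 : ℂ) * Real.pi * Complex.I * φ (hrep k) (grep l))) *
      star (c * Complex.exp ((-2 : ℂ) * Real.pi * Complex.I * φ (hrep k') (grep l)))
      = ((M.det.natAbs : ℂ))⁻¹ * Complex.exp ((-2 : ℂ) * Real.pi * Complex.I *
          φ (hrep k - hrep k') (grep l)) := by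
    intro l
    have hsub : φ (hrep k - hrep k') (grep l)
        = φ (hrep k) (grep l) - φ (hrep k') (grep l) := by
      have h := hφadd (hrep k - hrep k') (hrep k') (grep l)
      rw [sub_add_cancel] at h
      linear_combination -h
    have hconjarg : (starRingEnd ℂ) ((-2 : ℂ) * Real.pi * Complex.I * φ (hrep k') (grep l))
        = (2 : ℂ) * Real.pi * Complex.I * φ (hrep k') (grep l) := by
      simp only [_root_.map_mul, hφreal, map_neg, map_ofNat, Complex.conj_ofReal,
        Complex.conj_I]
      ring
    have hstar : star (c * Complex.exp ((-2 : ℂ) * Real.pi * Complex.I * φ (hrep k') (grep l)))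
        = (starRingEnd ℂ) c *
          Complex.exp ((2 : ℂ) * Real.pi * Complex.I * φ (hrep k') (grep l)) := by
      show (starRingEnd ℂ) _ = _
      rw [_root_.map_mul, ← Complex.exp_conj, hconjarg]
    rw [hstar, mul_mul_mul_comm, hcc, ← Complex.exp_add]
    congr 1
    rw [hsub]
    ring
  rw [Finset.sum_congr rfl fun l _ => hentry l]
  by_cases hkk : k = k'
  · subst hkk
    simp only [sub_self, hφzero, mul_zero, Complex.exp_zero, mul_one, if_pos rfl,
      Finset.sum_const, Finset.card_univ, Fintype.card_fin, nsmul_eq_mul]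
    rw [mul_inv_cancel₀ (by exact_mod_cast hm0)]
    simp
  · rw [if_neg hkk, ← Finset.mul_sum]
    set a : Fin d → ℤ := hrep k - hrep k' with ha
    set F : (Fin d → ℤ) → ℂ := fun g =>
      Complex.exp ((-2 : ℂ) * Real.pi * Complex.I * φ a g) with hF
    have hFmul : ∀ g g', F (g + g') = F g * F g' := by
      intro g g'
      rw [hF]
      simp only
      rw [hφaddg, ← Complex.exp_add]
      congr 1
      ring
    have hFperiodic : ∀ n, F (M.mulVec n) = 1 := by
      intro n
      rw [hF]
      simp only
      rw [hφint]
      rw [show (-2 : ℂ) * Real.pi * Complex.I * ((dotProduct a n : ℤ) : ℂ)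
          = ((-(dotProduct a n) : ℤ) : ℂ) * (2 * Real.pi * Complex.I) by push_cast; ring]
      exact Complex.exp_int_mul_two_pi_mul_I _
    -- F descends to the quotient
    have hresp : ∀ x y : (Fin d → ℤ),
        (QuotientAddGroup.leftRel (Matrix.mulVecLin M).range.toAddSubgroup) x y → F x = F y := by
      intro x y hxy
      rw [QuotientAddGroup.leftRel_apply] at hxy
      obtain ⟨n, hn⟩ := hxy
      have : y = x + M.mulVec n := by
        have : Matrix.mulVecLin M n = -x + y := hn
        simp only [Matrix.mulVecLin_apply] at this
        rw [this]; abel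
      rw [this, hFmul, hFperiodic, mul_one]
    set fbar : gQuot M → ℂ := Quotient.lift F (fun x y h => hresp x y (Quotient.eq'.mp
      (Quotient.sound h))) with hfbar
    have hfbar_mk : ∀ g, fbar (QuotientAddGroup.mk g) = F g := fun g => rfl
    haveI : Fintype (gQuot M) := Fintype.ofBijective _ hg
    have hfbarmul : ∀ x y : gQuot M, fbar (x + y) = fbar x * fbar y := by
      intro x y
      induction x using QuotientAddGroup.induction_on with
      | H g =>
        induction y using QuotientAddGroup.induction_on with
        | H g' =>
          rw [← QuotientAddGroup.mk_add, hfbar_mk, hfbar_mk, hfbar_mk, hFmul]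
    -- there is a nontrivial value
    have hwitness : ∃ g, F g ≠ 1 := by
      by_contra hcon
      push_neg at hcon
      have hb : ∀ j, ∃ n : ℤ, φ a (Pi.single j 1) = (n : ℂ) := by
        intro j
        have h1 := hcon (Pi.single j 1)
        rw [hF] at h1
        simp only at h1
        rw [Complex.exp_eq_one_iff] at h1
        obtain ⟨n, hn⟩ := h1
        refine ⟨-n, ?_⟩
        have h2 : (2 * (Real.pi : ℂ) * Complex.I) * φ a (Pi.single j 1)
            = (2 * (Real.pi : ℂ) * Complex.I) * ((-n : ℤ) : ℂ) := by
          push_cast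
          linear_combination -hn
        exact mul_left_cancel₀ Complex.two_pi_I_ne_zero h2
      choose b hbspec using hb
      -- cast b = Nᵀ.mulVec (cast a)
      have hcastb : (fun j => (b j : ℂ)) = N.transpose.mulVec (fun i => (a i : ℂ)) := by
        funext j
        rw [← hbspec j]
        simp only [hφ]
        rw [show (fun i => ((Pi.single j 1 : Fin d → ℤ) i : ℂ)) = Pi.single j (1 : ℂ) by
          funext i; by_cases hij : i = j <;> simp [Pi.single_apply, hij]]
        rw [Matrix.mulVec_single]
        simp only [dotProduct, Matrix.mulVec, Matrix.transpose_apply]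
        refine Finset.sum_congr rfl fun i _ => ?_
        simp [dotProduct]
        ring
      have hcasta : (fun i => (a i : ℂ)) = (Mc.transpose).mulVec (fun j => (b j : ℂ)) := by
        rw [hcastb, Matrix.mulVec_mulVec, ← Matrix.transpose_mul, hNM, Matrix.transpose_one,
          Matrix.one_mulVec]
      have hMTb : M.transpose.mulVec b = a := by
        funext i
        have h3 : ((M.transpose.mulVec b) i : ℂ) = (a i : ℂ) := by
          have h4 := cast_mulVec M.transpose b
          rw [show (M.transpose).map (Int.cast : ℤ → ℂ) = Mc.transpose by
            funext i j; simp [hMc, Matrix.map_apply, Matrix.transpose_apply]] at h4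
          rw [congrFun h4 i, ← congrFun hcasta i]
        exact_mod_cast h3
      have hrange : a ∈ (Matrix.mulVecLin M.transpose).range.toAddSubgroup := by
        exact ⟨b, by rw [Matrix.mulVecLin_apply]; exact hMTb⟩
      have heq : (QuotientAddGroup.mk (hrep k) : gQuot M.transpose)
          = QuotientAddGroup.mk (hrep k') := by
        rw [QuotientAddGroup.eq]
        have : -(hrep k) + hrep k' = -a := by rw [ha]; abel
        rw [this]
        exact neg_mem hrange
      exact hkk (hh.1 heq)
    obtain ⟨g0, hg0⟩ := hwitness
    have hsum : ∑ l, F (grep l) = ∑ x : gQuot M, fbar x :=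
      Fintype.sum_bijective _ hg _ _ (fun l => rfl)
    rw [hsum, char_sum_eq_zero fbar hfbarmul (QuotientAddGroup.mk g0) (by rwa [hfbar_mk]),
      mul_zero]
end
end

section
/- Let M be a regular integer matrix with elementary divisors ε_1 | ⋯ | ε_d and bases {y_j} of P(M) and {h_j} of G(M^T) satisfying ⟨h_j, y_i⟩ ≡ δ_{ij}/ε_{d-d_M+i} mod 1. Order P(M) and G(M^T) lexicographically by the coefficient tuples λ, μ ∈ E_M = ∏_j {0,…,ε_{d-d_M+j}-1}. Then the Fourier matrix F(M) equals the Kronecker product F_{ε_{d-d_M+1}} ⊗ ⋯ ⊗ F_{ε_d} of one-dimensional Fourier matrices. -/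
noncomputable section

lemma sqrt_prod' {ι : Type*} (s : Finset ι) (f : ι → ℝ) (hf : ∀ i, 0 ≤ f i) :
    Real.sqrt (∏ i ∈ s, f i) = ∏ i ∈ s, Real.sqrt (f i) := by
  classical
  induction s using Finset.induction with
  | empty => simp
  | insert _ _ hni ih =>
    rw [Finset.prod_insert hni, Finset.prod_insert hni, Real.sqrt_mul (hf _), ih]

/-- Kronecker factorization of the Fourier matrix: for biorthogonal bases `{y_j}` of
`P(M)` and `{h_j}` of `G(Mᵀ)` with `⟨h_j, y_i⟩ ≡ δ_{ij}/ε_i (mod 1)`, ordered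
lexicographically by the coefficient tuples, the entry of `F(M)` at `(μ, λ)` equals
the corresponding entry `∏_j F_{ε_j}(μ_j, λ_j)` of the Kronecker product
`F_{ε_1} ⊗ ⋯ ⊗ F_{ε_d}` (factors with `ε_j = 1` being trivial). -/
theorem fourier_matrix_kronecker (d : ℕ) (M Q R : Matrix (Fin d) (Fin d) ℤ)
    (ε : Fin d → ℕ) (hM : M.det ≠ 0)
    (hQ : Q.det.natAbs = 1) (hR : R.det.natAbs = 1)
    (hpos : ∀ j, 0 < ε j)
    (hdvd : ∀ (j : Fin d) (h : (j : ℕ) + 1 < d), ε j ∣ ε ⟨(j : ℕ) + 1, h⟩)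
    (hSNF : M = Q * Matrix.diagonal (fun j => (ε j : ℤ)) * R)
    (y : Fin d → (Fin d → ℝ)) (h : Fin d → (Fin d → ℤ))
    (hybasis : ∀ p ∈ pat M, ∃! lam : (j : Fin d) → Fin (ε j),
      p = QuotientAddGroup.mk (∑ j : Fin d, ((lam j : ℕ) : ℝ) • y j))
    (hhbasis : ∀ q : gQuot M.transpose, ∃! mu : (j : Fin d) → Fin (ε j),
      q = QuotientAddGroup.mk (∑ j : Fin d, ((mu j : ℕ) : ℤ) • h j))
    (hbio : ∀ i j : Fin d, ∃ z : ℤ,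
      dotProduct (fun k => (h j k : ℝ)) (y i)
        = (if i = j then (ε i : ℝ)⁻¹ else 0) + z) :
    ∀ mu lam : (j : Fin d) → Fin (ε j),
      ((Real.sqrt M.det.natAbs : ℂ))⁻¹ *
        Complex.exp ((-2 : ℂ) * Real.pi * Complex.I *
          ((dotProduct
              (fun k => (((∑ j : Fin d, ((mu j : ℕ) : ℤ) • h j)) k : ℝ))
              (∑ j : Fin d, ((lam j : ℕ) : ℝ) • y j) : ℝ) : ℂ))
      = ∏ j : Fin d,
          ((Real.sqrt (ε j) : ℂ))⁻¹ *
            Complex.exp ((-2 : ℂ) * Real.pi * Complex.I *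
              ((((mu j : ℕ) : ℝ) * ((lam j : ℕ) : ℝ) / (ε j : ℝ) : ℝ) : ℂ)) := by
  intro mu lam
  classical
  choose z hz using hbio
  -- determinant
  have hdet : (M.det.natAbs : ℝ) = ∏ j, (ε j : ℝ) := by
    have h1 : M.det.natAbs = ∏ j, ε j := by
      rw [hSNF, Matrix.det_mul, Matrix.det_mul, Matrix.det_diagonal,
        Int.natAbs_mul, Int.natAbs_mul, hQ, hR]
      have h2 : (∏ i : Fin d, ((ε i : ℤ))) = ((∏ i : Fin d, ε i : ℕ) : ℤ) := by
        push_cast; rfl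
      rw [h2, Int.natAbs_natCast]
      ring
    rw [h1]; push_cast; rfl
  have hsqrt : ((Real.sqrt M.det.natAbs : ℂ))⁻¹
      = ∏ j, ((Real.sqrt (ε j) : ℂ))⁻¹ := by
    rw [hdet, sqrt_prod' _ _ (fun i => by positivity)]
    push_cast
    rw [Finset.prod_inv_distrib]
  -- the dot product
  set Z : ℤ := ∑ j : Fin d, ∑ i : Fin d,
      ((mu j : ℕ) : ℤ) * ((lam i : ℕ) : ℤ) * z i j with hZ
  have hdp : (dotProduct
        (fun k => (((∑ j : Fin d, ((mu j : ℕ) : ℤ) • h j)) k : ℝ))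
        (∑ j : Fin d, ((lam j : ℕ) : ℝ) • y j))
      = (∑ j : Fin d, ((mu j : ℕ) : ℝ) * ((lam j : ℕ) : ℝ) / (ε j : ℝ)) + (Z : ℝ) := by
    have expand : (dotProduct
        (fun k => (((∑ j : Fin d, ((mu j : ℕ) : ℤ) • h j)) k : ℝ))
        (∑ j : Fin d, ((lam j : ℕ) : ℝ) • y j))
        = ∑ j : Fin d, ∑ i : Fin d, ((mu j : ℕ) : ℝ) * ((lam i : ℕ) : ℝ) *
            dotProduct (fun k => ((h j k : ℝ))) (y i) := by
      have e1 : (dotProduct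
          (fun k => (((∑ j : Fin d, ((mu j : ℕ) : ℤ) • h j)) k : ℝ))
          (∑ j : Fin d, ((lam j : ℕ) : ℝ) • y j))
          = ∑ k : Fin d, ∑ j : Fin d, ∑ i : Fin d,
            ((((mu j : ℕ) : ℝ)) * ((h j k : ℝ))) * ((((lam i : ℕ) : ℝ)) * y i k) := by
        simp only [dotProduct, Finset.sum_apply, Pi.smul_apply, smul_eq_mul]
        push_cast
        simp only [Finset.sum_mul_sum]
      rw [e1]
      conv_lhs => rw [Finset.sum_comm]
      refine Finset.sum_congr rfl fun j _ => ?_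
      conv_lhs => rw [Finset.sum_comm]
      refine Finset.sum_congr rfl fun i _ => ?_
      simp only [dotProduct, Finset.mul_sum]
      exact Finset.sum_congr rfl fun k _ => by ring
    rw [expand]
    have : ∀ j : Fin d, ∑ i : Fin d, ((mu j : ℕ) : ℝ) * ((lam i : ℕ) : ℝ) *
            dotProduct (fun k => ((h j k : ℝ))) (y i)
        = ((mu j : ℕ) : ℝ) * ((lam j : ℕ) : ℝ) / (ε j : ℝ)
          + ∑ i : Fin d, ((mu j : ℕ) : ℝ) * ((lam i : ℕ) : ℝ) * (z i j : ℝ) := by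
      intro j
      have : ∀ i : Fin d, ((mu j : ℕ) : ℝ) * ((lam i : ℕ) : ℝ) *
            dotProduct (fun k => ((h j k : ℝ))) (y i)
          = (if i = j then ((mu j : ℕ) : ℝ) * ((lam i : ℕ) : ℝ) * (ε i : ℝ)⁻¹ else 0)
            + ((mu j : ℕ) : ℝ) * ((lam i : ℕ) : ℝ) * (z i j : ℝ) := by
        intro i
        rw [hz i j, mul_add]
        congr 1
        split <;> simp
      rw [Finset.sum_congr rfl (fun i _ => this i), Finset.sum_add_distrib,
        Finset.sum_ite_eq' Finset.univ j]
      simp [div_eq_mul_inv]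
    rw [Finset.sum_congr rfl (fun j _ => this j), Finset.sum_add_distrib, hZ]
    push_cast
    ring
  rw [hdp]
  push_cast
  rw [mul_add, Complex.exp_add]
  have hZ1 : Complex.exp ((-2 : ℂ) * ↑Real.pi * Complex.I * (Z : ℂ)) = 1 := by
    have : (-2 : ℂ) * ↑Real.pi * Complex.I * (Z : ℂ)
        = ((-Z : ℤ) : ℂ) * (2 * ↑Real.pi * Complex.I) := by push_cast; ring
    rw [this, Complex.exp_int_mul_two_pi_mul_I]
  rw [hZ1, mul_one, hsqrt, Finset.mul_sum, Complex.exp_sum,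
    ← Finset.prod_mul_distrib]
end
end

section
/- Let M = JN with J, N ∈ ℤ^{d×d} regular, and let {x_1,…,x_{d_M}} and {y_1,…,y_{d_N}} be bases of P(M) and P(N) respectively. Then there exists a matrix P ∈ ℕ_0^{d_M×d_N} such that whenever w ∈ P(N) has coefficient vector μ with respect to {y_k} and coefficient vector λ with respect to {x_l} (as an element of P(M) ⊇ P(N)), one has λ ≡ Pμ componentwise modulo the respective cycle lengths. -/
noncomputable section

lemma mem_intLat_iff {d : ℕ} (u : Fin d → ℝ) :
    u ∈ intLat d ↔ ∃ a : Fin d → ℤ, (fun i => ((a i : ℤ) : ℝ)) = u := by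
  simp only [AddMonoidHom.mem_range, AddMonoidHom.compLeft_apply]
  constructor
  · rintro ⟨a, rfl⟩; exact ⟨a, rfl⟩
  · rintro ⟨a, rfl⟩; exact ⟨a, rfl⟩

lemma lat_mono {d : ℕ} (J N : Matrix (Fin d) (Fin d) ℤ) : lat N ≤ lat (J * N) := by
  intro v hv
  simp only [AddSubgroup.mem_comap, LinearMap.toAddMonoidHom_coe,
    Matrix.mulVecLin_apply] at hv ⊢
  rw [mem_intLat_iff] at hv ⊢
  obtain ⟨a, ha⟩ := hv
  refine ⟨J.mulVec a, ?_⟩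
  rw [show ((J * N).map (Int.cast : ℤ → ℝ)) = (J.map Int.cast) * (N.map Int.cast) from by
    ext i j; simp [Matrix.mul_apply, Matrix.map_apply], ← Matrix.mulVec_mulVec, ← ha]
  funext i
  simp [Matrix.mulVec, dotProduct, Matrix.map_apply]

lemma pat_mono {d : ℕ} (J N : Matrix (Fin d) (Fin d) ℤ) : pat N ≤ pat (J * N) :=
  AddSubgroup.map_mono (lat_mono J N)

lemma natsmul_mem_intLat {d : ℕ} (n : ℕ) {v : Fin d → ℝ} (hv : v ∈ intLat d) :
    (n : ℝ) • v ∈ intLat d := by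
  rw [Nat.cast_smul_eq_nsmul]
  exact AddSubgroup.nsmul_mem _ hv n

/-- Projection lemma: for `M = J N` with bases `{x_l}` of `P(M)` and `{y_k}` of
`P(N) ⊆ P(M)`, there is a matrix `P ∈ ℕ₀^{d×d}` such that whenever `w ∈ P(N)` has
coefficients `μ` w.r.t. `{y_k}` and coefficients `λ` w.r.t. `{x_l}`, one has
`λ ≡ P μ` componentwise modulo the respective cycle lengths. -/
theorem projection_matrix_exists (d : ℕ) (J N : Matrix (Fin d) (Fin d) ℤ)
    (hJ : J.det ≠ 0) (hN : N.det ≠ 0)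
    (epsM epsN : Fin d → ℕ) (hposM : ∀ j, 0 < epsM j) (hposN : ∀ j, 0 < epsN j)
    (x y : Fin d → (Fin d → ℝ))
    (hxmem : ∀ j, (QuotientAddGroup.mk (x j) : (Fin d → ℝ) ⧸ intLat d) ∈ pat (J * N))
    (hymem : ∀ j, (QuotientAddGroup.mk (y j) : (Fin d → ℝ) ⧸ intLat d) ∈ pat N)
    (hordx : ∀ j, ((epsM j : ℝ) • x j) ∈ intLat d)
    (hordy : ∀ j, ((epsN j : ℝ) • y j) ∈ intLat d)
    (hxbasis : ∀ p ∈ pat (J * N), ∃! lam : (j : Fin d) → Fin (epsM j),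
      p = QuotientAddGroup.mk (∑ j : Fin d, ((lam j : ℕ) : ℝ) • x j))
    (hybasis : ∀ p ∈ pat N, ∃! mu : (j : Fin d) → Fin (epsN j),
      p = QuotientAddGroup.mk (∑ j : Fin d, ((mu j : ℕ) : ℝ) • y j)) :
    ∃ P : Matrix (Fin d) (Fin d) ℕ,
      ∀ (mu : (j : Fin d) → Fin (epsN j)) (lam : (j : Fin d) → Fin (epsM j)),
        (QuotientAddGroup.mk (∑ j : Fin d, ((mu j : ℕ) : ℝ) • y j) :
            (Fin d → ℝ) ⧸ intLat d)
          = QuotientAddGroup.mk (∑ j : Fin d, ((lam j : ℕ) : ℝ) • x j) →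
        ∀ l : Fin d, (lam l : ℕ) ≡ ∑ k : Fin d, P l k * (mu k : ℕ) [MOD epsM l] := by
  classical
  have hyM : ∀ k, (QuotientAddGroup.mk (y k) : (Fin d → ℝ) ⧸ intLat d) ∈ pat (J*N) :=
    fun k => pat_mono J N (hymem k)
  have hch : ∀ k, ∃ lam : (j : Fin d) → Fin (epsM j),
      (QuotientAddGroup.mk (y k) : (Fin d → ℝ) ⧸ intLat d)
        = QuotientAddGroup.mk (∑ j : Fin d, ((lam j : ℕ) : ℝ) • x j) :=
    fun k => (hxbasis _ (hyM k)).exists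
  choose L hL using hch
  refine ⟨fun l k => (L k l : ℕ), ?_⟩
  intro mu lam heq l
  set c : Fin d → ℕ := fun l => ∑ k, (L k l : ℕ) * (mu k : ℕ) with hc
  -- step 1: mk(Σ μ y) = mk(Σ c x)
  have key : (QuotientAddGroup.mk (∑ j : Fin d, ((mu j : ℕ) : ℝ) • y j) :
      (Fin d → ℝ) ⧸ intLat d) = QuotientAddGroup.mk (∑ l : Fin d, ((c l : ℝ)) • x l) := by
    have : ∀ a b : Fin d → ℝ, (QuotientAddGroup.mk a : (Fin d → ℝ) ⧸ intLat d)
        = QuotientAddGroup.mk b ↔ -a + b ∈ intLat d := fun a b => QuotientAddGroup.eq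
    rw [this]
    have hdiff : -(∑ j : Fin d, ((mu j : ℕ) : ℝ) • y j) + ∑ l : Fin d, ((c l : ℝ)) • x l
        = ∑ k : Fin d, ((mu k : ℕ) : ℝ) •
            (-(y k) + ∑ l : Fin d, ((L k l : ℕ) : ℝ) • x l) := by
      rw [hc]
      push_cast
      simp only [smul_add, smul_neg, Finset.sum_add_distrib, Finset.smul_sum]
      rw [Finset.sum_comm]
      congr 1
      · rw [← Finset.sum_neg_distrib]
      · refine Finset.sum_congr rfl fun l _ => ?_
        rw [Finset.sum_smul]
        refine Finset.sum_congr rfl fun k _ => ?_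
        rw [smul_smul, mul_comm]
    rw [hdiff]
    refine AddSubgroup.sum_mem _ fun k _ => natsmul_mem_intLat _ ?_
    have := hL k
    rw [this] at *
    exact (QuotientAddGroup.eq).mp (hL k)
  -- step 2: reduce c mod epsM
  have key2 : (QuotientAddGroup.mk (∑ l : Fin d, ((c l : ℝ)) • x l) :
      (Fin d → ℝ) ⧸ intLat d)
      = QuotientAddGroup.mk (∑ l : Fin d, ((c l % epsM l : ℕ) : ℝ) • x l) := by
    rw [QuotientAddGroup.eq]
    have hdiff : -(∑ l : Fin d, ((c l : ℝ)) • x l)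
        + ∑ l : Fin d, ((c l % epsM l : ℕ) : ℝ) • x l
        = ∑ l : Fin d, (-((c l / epsM l : ℕ) : ℝ)) • ((epsM l : ℝ) • x l) := by
      rw [← Finset.sum_neg_distrib, ← Finset.sum_add_distrib]
      refine Finset.sum_congr rfl fun l _ => ?_
      rw [smul_smul, ← neg_smul, ← add_smul]
      congr 1
      have := Nat.mod_add_div (c l) (epsM l)
      have h2 : ((c l % epsM l : ℕ) : ℝ) + (epsM l : ℝ) * ((c l / epsM l : ℕ) : ℝ)
          = ((c l : ℕ) : ℝ) := by exact_mod_cast congrArg (Nat.cast : ℕ → ℝ) this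
      linarith
    rw [hdiff]
    refine AddSubgroup.sum_mem _ fun l _ => ?_
    rw [neg_smul]
    exact AddSubgroup.neg_mem _ (natsmul_mem_intLat _ (hordx l))
  -- step 3: uniqueness
  have hp : (QuotientAddGroup.mk (∑ j : Fin d, ((lam j : ℕ) : ℝ) • x j) :
      (Fin d → ℝ) ⧸ intLat d) ∈ pat (J * N) := by
    rw [← heq, key, key2]
    have hsum : (QuotientAddGroup.mk (∑ l : Fin d, ((c l % epsM l : ℕ) : ℝ) • x l) :
        (Fin d → ℝ) ⧸ intLat d)
        = ∑ l : Fin d, (c l % epsM l) • (QuotientAddGroup.mk (x l) :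
          (Fin d → ℝ) ⧸ intLat d) := by
      show (QuotientAddGroup.mk' (intLat d)) (∑ l : Fin d, ((c l % epsM l : ℕ) : ℝ) • x l) = _
      rw [map_sum]
      refine Finset.sum_congr rfl fun l _ => ?_
      rw [Nat.cast_smul_eq_nsmul]
      exact map_nsmul (QuotientAddGroup.mk' (intLat d)) _ _
    rw [hsum]
    exact AddSubgroup.sum_mem _ fun l _ => AddSubgroup.nsmul_mem _ (hxmem l) _
  obtain ⟨u, _, huniq⟩ := hxbasis _ hp
  have h1 : lam = u := huniq lam rfl
  have h2 : (fun l => (⟨c l % epsM l, Nat.mod_lt _ (hposM l)⟩ : Fin (epsM l))) = u := by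
    refine huniq _ ?_
    rw [← heq, key, key2]
  have : (lam l : ℕ) = c l % epsM l := by
    rw [h1, ← h2]
  rw [this]
  exact Nat.mod_modEq _ _
end
end
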